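/- arXiv:1010.1163 — 2 statements merged into one kernel-verified Lean document; each statement's English description precedes it below -/
import Mathlib

section
/- Let M ≥ 1 and let x : Fin M → ℂ be injective. Then for every σ > 0 the constellation-constrained secrecy capacity tends to zero at high SNR: C_σ(s) → 0 as s → ∞. -/
open MeasureTheory Real

/-- The standard complex Gaussian probability measure on ℂ:
density `w ↦ (1/π)·exp(−|w|²)` with respect to Lebesgue measure on ℂ ≅ ℝ². -/
noncomputable def gaussianC : Measure ℂ :=
  MeasureTheory.volume.withDensity
    (fun w => ENNReal.ofReal (π⁻¹ * Real.exp (-(‖w‖) ^ 2)))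

/-- The expectation term
`g_i(σ, s) = ∫_ℂ log₂( Σ_j exp( −|σ·w + √s·(x i − x j)|² / σ² ) ) dγ(w)`. -/
noncomputable def g (M : ℕ) (x : Fin M → ℂ) (σ s : ℝ) (i : Fin M) : ℝ :=
  ∫ w : ℂ,
    Real.logb 2 (∑ j : Fin M,
      Real.exp (-(‖(σ : ℂ) * w + (Real.sqrt s : ℂ) * (x i - x j)‖) ^ 2 / σ ^ 2))
    ∂gaussianC

/-- The constellation-constrained secrecy capacity
`C_σ(s) = (1/M)·Σ_i ( g_i(σ, s) − g_i(1, s) )`. -/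
noncomputable def Ccc (M : ℕ) (x : Fin M → ℂ) (σ s : ℝ) : ℝ :=
  (1 / (M : ℝ)) * ∑ i : Fin M, (g M x σ s i - g M x 1 s i)

open Filter Topology

private lemma sqrt_tendsto_atTop' : Tendsto Real.sqrt atTop atTop := by
  have h : Real.sqrt = fun x : ℝ => x ^ (1/2 : ℝ) := funext fun x => Real.sqrt_eq_rpow x
  rw [h]; exact tendsto_rpow_atTop (by norm_num)

private lemma exp_half_integrable' :
    Integrable (fun w : ℂ => Real.exp (-(1/2) * ‖w‖^2)) volume := by
  have h := GaussianFourier.integrable_cexp_neg_mul_sq_norm_add (V := ℂ)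
    (b := (1/2 : ℂ)) (by norm_num) 0 0
  have h2 := h.norm
  simp only [zero_mul, add_zero, Complex.norm_exp] at h2
  refine h2.congr (Eventually.of_forall fun w => ?_)
  norm_cast
  simp [Complex.mul_re, ← Complex.ofReal_pow]

private lemma term_self' {σ : ℝ} (hσ : 0 < σ) (w : ℂ) :
    -(‖(σ : ℂ) * w‖) ^ 2 / σ ^ 2 = -(‖w‖) ^ 2 := by
  rw [norm_mul, Complex.norm_real, Real.norm_eq_abs, abs_of_pos hσ, mul_pow, neg_div,
    mul_div_cancel_left₀ _ (pow_ne_zero 2 hσ.ne')]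

private lemma g_tendsto {M : ℕ} (hM : 1 ≤ M) (x : Fin M → ℂ)
    (hx : Function.Injective x) {σ : ℝ} (hσ : 0 < σ) (i : Fin M) :
    Tendsto (fun s => g M x σ s i) atTop
      (𝓝 (∫ w : ℂ, Real.logb 2 (Real.exp (-(‖w‖) ^ 2)) ∂gaussianC)) := by
  have hne : Nonempty (Fin M) := ⟨⟨0, hM⟩⟩
  unfold g
  have hSpos : ∀ (s : ℝ) (w : ℂ), 0 < ∑ j : Fin M,
      Real.exp (-(‖(σ : ℂ) * w + (Real.sqrt s : ℂ) * (x i - x j)‖) ^ 2 / σ ^ 2) :=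
    fun s w => Finset.sum_pos (fun j _ => Real.exp_pos _) Finset.univ_nonempty
  have hexp_nonpos : ∀ (a τ : ℝ), -(a) ^ 2 / τ ^ 2 ≤ 0 := by
    intro a τ; rw [neg_div]; exact neg_nonpos.mpr (div_nonneg (sq_nonneg _) (sq_nonneg _))
  have hSle : ∀ (s : ℝ) (w : ℂ), (∑ j : Fin M,
      Real.exp (-(‖(σ : ℂ) * w + (Real.sqrt s : ℂ) * (x i - x j)‖) ^ 2 / σ ^ 2))
      ≤ M := by
    intro s w
    calc (∑ j : Fin M,
        Real.exp (-(‖(σ : ℂ) * w + (Real.sqrt s : ℂ) * (x i - x j)‖) ^ 2 / σ ^ 2))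
        ≤ ∑ _j : Fin M, (1 : ℝ) := Finset.sum_le_sum fun j _ =>
          ((Real.exp_le_exp.mpr (hexp_nonpos _ _)).trans_eq Real.exp_zero)
      _ = M := by simp
  have hSge : ∀ (s : ℝ) (w : ℂ), Real.exp (-(‖w‖) ^ 2) ≤ ∑ j : Fin M,
      Real.exp (-(‖(σ : ℂ) * w + (Real.sqrt s : ℂ) * (x i - x j)‖) ^ 2 / σ ^ 2) := by
    intro s w
    have h := Finset.single_le_sum (f := fun j : Fin M =>
        Real.exp (-(‖(σ : ℂ) * w + (Real.sqrt s : ℂ) * (x i - x j)‖) ^ 2 / σ ^ 2))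
      (fun j _ => (Real.exp_pos _).le) (Finset.mem_univ i)
    rwa [sub_self, mul_zero, add_zero, term_self' hσ w] at h
  refine tendsto_integral_filter_of_dominated_convergence
    (bound := fun w : ℂ => Real.logb 2 M + (‖w‖) ^ 2 / Real.log 2) ?_ ?_ ?_ ?_
  · -- measurability
    refine Eventually.of_forall fun s => Continuous.aestronglyMeasurable ?_
    have hS : Continuous fun w : ℂ => ∑ j : Fin M,
        Real.exp (-(‖(σ : ℂ) * w + (Real.sqrt s : ℂ) * (x i - x j)‖) ^ 2 / σ ^ 2) := by
      apply continuous_finset_sum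
      intro j _
      exact Real.continuous_exp.comp
        ((((continuous_norm.comp
          ((continuous_const.mul continuous_id).add continuous_const)).pow 2).neg).div_const _)
    simp only [Real.logb]
    exact (hS.log fun w => (hSpos s w).ne').div_const _
  · -- bound
    refine Eventually.of_forall fun s => Eventually.of_forall fun w => ?_
    have hub : Real.logb 2 (∑ j : Fin M,
        Real.exp (-(‖(σ : ℂ) * w + (Real.sqrt s : ℂ) * (x i - x j)‖) ^ 2 / σ ^ 2))
        ≤ Real.logb 2 M := Real.logb_le_logb_of_le one_lt_two (hSpos s w) (hSle s w)
    have hlb : -(‖w‖) ^ 2 / Real.log 2 ≤ Real.logb 2 (∑ j : Fin M,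
        Real.exp (-(‖(σ : ℂ) * w + (Real.sqrt s : ℂ) * (x i - x j)‖) ^ 2 / σ ^ 2)) := by
      have h := Real.logb_le_logb_of_le one_lt_two (Real.exp_pos _) (hSge s w)
      rwa [Real.logb, Real.log_exp] at h
    rw [neg_div] at hlb
    have hM0 : (0 : ℝ) ≤ Real.logb 2 M :=
      Real.logb_nonneg one_lt_two (by exact_mod_cast hM)
    have hw0 : 0 ≤ (‖w‖) ^ 2 / Real.log 2 :=
      div_nonneg (sq_nonneg _) (Real.log_nonneg one_le_two)
    rw [Real.norm_eq_abs, abs_le]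
    constructor <;> linarith
  · -- bound integrable
    have hmeas : Measurable fun w : ℂ => ENNReal.ofReal (π⁻¹ * Real.exp (-(‖w‖) ^ 2)) :=
      (continuous_const.mul
        (Real.continuous_exp.comp ((continuous_norm.pow 2).neg))).measurable.ennreal_ofReal
    unfold gaussianC
    rw [integrable_withDensity_iff hmeas (Eventually.of_forall fun w => ENNReal.ofReal_lt_top)]
    have htr : ∀ w : ℂ, (ENNReal.ofReal (π⁻¹ * Real.exp (-(‖w‖) ^ 2))).toReal
        = π⁻¹ * Real.exp (-(‖w‖) ^ 2) :=
      fun w => ENNReal.toReal_ofReal (by positivity)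
    simp_rw [htr]
    set c : ℝ := Real.logb 2 M with hc_def
    set L : ℝ := Real.log 2 with hL_def
    have hc : 0 ≤ c := Real.logb_nonneg one_lt_two (by exact_mod_cast hM)
    have hL : 0 < L := Real.log_pos one_lt_two
    refine Integrable.mono' (exp_half_integrable'.const_mul (π⁻¹ * (c + 2 / L))) ?_ ?_
    · exact ((continuous_const.add ((continuous_norm.pow 2).div_const _)).mul
        (continuous_const.mul
          (Real.continuous_exp.comp ((continuous_norm.pow 2).neg)))).aestronglyMeasurable
    · refine Eventually.of_forall fun w => ?_
      rw [Real.norm_eq_abs, abs_of_nonneg (by positivity)]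
      set t : ℝ := (‖w‖) ^ 2 with ht_def
      have ht : 0 ≤ t := sq_nonneg _
      set a : ℝ := Real.exp (-(1/2) * t) with ha_def
      set b : ℝ := Real.exp ((1/2) * t) with hb_def
      have ha0 : 0 < a := Real.exp_pos _
      have hb0 : 0 < b := Real.exp_pos _
      have hab : a * b = 1 := by
        rw [ha_def, hb_def, ← Real.exp_add]; ring_nf; exact Real.exp_zero
      have hb1 : 1 + (1/2) * t ≤ b := by
        have := Real.add_one_le_exp ((1/2) * t); rw [← hb_def] at this; linarith
      have hexp_t : Real.exp (-t) = a * a := by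
        rw [ha_def, ← Real.exp_add]; ring_nf
      have key : a * (1 + (1/2) * t) ≤ 1 := by nlinarith
      have ha1 : a ≤ 1 := by nlinarith
      have h5 : t * a ≤ 2 := by nlinarith
      have h6 : t / L * a ≤ 2 / L := by
        rw [div_mul_eq_mul_div]
        exact (div_le_div_iff_of_pos_right hL).mpr h5
      have step : (c + t / L) * a ≤ c + 2 / L := by
        have h7 : c * a ≤ c := mul_le_of_le_one_right hc ha1
        nlinarith
      calc (c + t / L) * (π⁻¹ * Real.exp (-t))
          = π⁻¹ * (((c + t / L) * a) * a) := by rw [hexp_t]; ring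
        _ ≤ π⁻¹ * ((c + 2 / L) * a) := by
            refine mul_le_mul_of_nonneg_left ?_ (by positivity)
            exact mul_le_mul_of_nonneg_right step ha0.le
        _ = π⁻¹ * (c + 2 / L) * a := by ring
  · -- pointwise convergence
    refine Eventually.of_forall fun w => ?_
    set l : Fin M → ℝ := fun j => if j = i then Real.exp (-(‖w‖) ^ 2) else 0 with hl_def
    have hlim : ∀ j : Fin M, Tendsto (fun s : ℝ =>
        Real.exp (-(‖(σ : ℂ) * w + (Real.sqrt s : ℂ) * (x i - x j)‖) ^ 2 / σ ^ 2))
        atTop (𝓝 (l j)) := by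
      intro j
      by_cases hj : j = i
      · subst hj
        simp only [hl_def, if_pos rfl, sub_self, mul_zero, add_zero, term_self' hσ w]
        exact tendsto_const_nhds
      · have hd : x i - x j ≠ 0 := sub_ne_zero_of_ne fun h => hj (hx h).symm
        have hlbt : Tendsto (fun s : ℝ =>
            Real.sqrt s * ‖x i - x j‖ - ‖(σ : ℂ) * w‖) atTop atTop := by
          simp only [sub_eq_add_neg]
          exact tendsto_atTop_add_const_right _ _
            (sqrt_tendsto_atTop'.atTop_mul_const (norm_pos_iff.mpr hd))
        have habs : Tendsto (fun s : ℝ =>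
            ‖(σ : ℂ) * w + (Real.sqrt s : ℂ) * (x i - x j)‖) atTop atTop := by
          refine tendsto_atTop_mono (fun s => ?_) hlbt
          have h2 := norm_sub_norm_le ((Real.sqrt s : ℂ) * (x i - x j)) (-((σ : ℂ) * w))
          rw [sub_neg_eq_add, norm_neg] at h2
          have h3 : ‖(Real.sqrt s : ℂ) * (x i - x j)‖ = Real.sqrt s * ‖x i - x j‖ := by
            rw [norm_mul, Complex.norm_real, Real.norm_eq_abs,
              abs_of_nonneg (Real.sqrt_nonneg s)]
          rw [h3, add_comm] at h2
          exact h2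
        have hsq : Tendsto (fun s : ℝ =>
            (‖(σ : ℂ) * w + (Real.sqrt s : ℂ) * (x i - x j)‖) ^ 2 / σ ^ 2)
            atTop atTop := by
          have hpow : Tendsto (fun y : ℝ => y ^ 2) atTop atTop :=
            tendsto_pow_atTop (by norm_num)
          exact (hpow.comp habs).atTop_div_const (by positivity)
        have hterm := Real.tendsto_exp_atBot.comp (tendsto_neg_atTop_atBot.comp hsq)
        simp only [hl_def, if_neg hj]
        refine hterm.congr fun s => ?_
        simp [Function.comp, neg_div]
    have hsum := tendsto_finset_sum Finset.univ (fun j (_ : j ∈ Finset.univ) => hlim j)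
    have hsum_eq : ∑ j : Fin M, l j = Real.exp (-(‖w‖) ^ 2) := by
      simp [hl_def]
    rw [hsum_eq] at hsum
    have hcont : ContinuousAt (Real.logb 2) (Real.exp (-(‖w‖) ^ 2)) :=
      Real.continuousAt_logb (Real.exp_pos _).ne'
    have := hcont.tendsto.comp hsum
    simpa [Function.comp_def] using this

theorem ccsc_tendsto_zero_at_high_snr (M : ℕ) (hM : 1 ≤ M) (x : Fin M → ℂ)
    (hx : Function.Injective x) (σ : ℝ) (hσ : 0 < σ) :
    Filter.Tendsto (fun s => Ccc M x σ s) Filter.atTop (nhds 0) := by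
  have h : ∀ i : Fin M, Tendsto (fun s => g M x σ s i - g M x 1 s i) atTop (𝓝 0) := fun i => by
    simpa using (g_tendsto hM x hx hσ i).sub (g_tendsto hM x hx one_pos i)
  have hs := tendsto_finset_sum Finset.univ (fun i (_ : i ∈ Finset.univ) => h i)
  have hs' : Tendsto (fun s => Ccc M x σ s) atTop
      (𝓝 ((1 / (M : ℝ)) * ∑ _i : Fin M, (0 : ℝ))) := by
    unfold Ccc
    exact hs.const_mul _
  simpa using hs'
end

section
/- For every integer M ≥ 1, every constellation x : Fin M → ℂ, every σ > 0 and every s ≥ 0, the constellation-constrained secrecy capacity is bounded: |C_σ(s)| ≤ log₂ M + log₂ e. -/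
open MeasureTheory Real

/- ### Auxiliary lemmas -/

lemma int_radial (k : ℕ) :
    ∫ x in Set.Ioi (0:ℝ), x ^ (2*k+1) * Real.exp (-x^2) = (k.factorial : ℝ) / 2 := by
  have h := integral_comp_rpow_Ioi_of_pos
    (g := fun y : ℝ => (1/2) * (Real.exp (-y) * y ^ (k:ℝ))) (p := 2) two_pos
  rw [integral_const_mul] at h
  have h2 : ∫ y in Set.Ioi (0:ℝ), Real.exp (-y) * y ^ (k:ℝ) = (k.factorial : ℝ) := by
    have h3 := Real.Gamma_eq_integral (s := (k:ℝ)+1) (by positivity)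
    rw [add_sub_cancel_right] at h3
    rw [← h3]
    exact_mod_cast Real.Gamma_nat_eq_factorial k
  rw [h2] at h
  rw [show (k.factorial : ℝ)/2 = 1/2 * (k.factorial:ℝ) by ring, ← h]
  rw [show (2:ℝ) - 1 = 1 by norm_num]
  apply MeasureTheory.setIntegral_congr_fun measurableSet_Ioi
  intro x hx
  have hx0 : (0:ℝ) < x := hx
  simp only [smul_eq_mul]
  rw [Real.rpow_one, Real.rpow_natCast,
    show x ^ (2:ℝ) = x ^ (2:ℕ) by rw [← Real.rpow_natCast]; norm_num]
  rw [pow_succ, pow_mul]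
  ring

lemma int_polar (k : ℕ) :
    ∫ w : ℂ, (‖w‖)^(2*k) * Real.exp (-(‖w‖)^2) = π * k.factorial := by
  rw [← Complex.integral_comp_polarCoord_symm]
  rw [show polarCoord.target = Set.Ioi (0:ℝ) ×ˢ Set.Ioo (-π) π from rfl]
  rw [Measure.volume_eq_prod]
  rw [MeasureTheory.setIntegral_congr_fun
    (by exact (measurableSet_Ioi.prod measurableSet_Ioo))
    (g := fun p : ℝ × ℝ => (p.1^(2*k+1) * Real.exp (-p.1^2)) * (1:ℝ))
    (by
      intro p hp
      simp only [Complex.norm_polarCoord_symm, smul_eq_mul, mul_one]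
      rw [abs_of_pos hp.1, pow_succ, pow_mul]
      ring)]
  rw [MeasureTheory.setIntegral_prod_mul (L := ℝ)
    (fun r : ℝ => r^(2*k+1)*Real.exp (-r^2)) (fun _ : ℝ => (1:ℝ))]
  rw [int_radial]
  simp [Real.volume_Ioo]
  rw [max_eq_left (by positivity)]
  ring

lemma integ_exp {b : ℝ} (hb : 0 < b) :
    Integrable (fun w : ℂ => Real.exp (-b * (‖w‖)^2)) volume := by
  have h := (GaussianFourier.integrable_cexp_neg_mul_sq_norm_add (V := ℂ)
    (b := (b:ℂ)) (by simpa using hb) 0 0).norm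
  refine h.congr (Filter.Eventually.of_forall fun v => ?_)
  simp [Complex.norm_exp, ← Complex.ofReal_pow]

lemma integ_sq_exp :
    Integrable (fun w : ℂ => (‖w‖)^2 * Real.exp (-(‖w‖)^2)) volume := by
  apply Integrable.mono' ((integ_exp (b := 1/2) (by norm_num)).const_mul 2)
  · exact (((continuous_norm.pow 2)).mul
      (Real.continuous_exp.comp ((continuous_norm.pow 2).neg))).aestronglyMeasurable
  · refine Filter.Eventually.of_forall fun w => ?_
    set t := (‖w‖)^2 with ht
    have ht0 : 0 ≤ t := sq_nonneg _
    rw [norm_of_nonneg (by positivity)]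
    have h1 : t/2 + 1 ≤ Real.exp (t/2) := Real.add_one_le_exp _
    have h2 : Real.exp (-t) = Real.exp (-(1/2)*t) * Real.exp (-(1/2)*t) := by
      rw [← Real.exp_add]; ring_nf
    have h3 : Real.exp (-(1/2)*t) * Real.exp ((1/2)*t) = 1 := by
      rw [← Real.exp_add]; ring_nf; exact Real.exp_zero
    have h4 : Real.exp ((1/2)*t) = Real.exp (t/2) := by ring_nf
    have hpos := Real.exp_pos (-(1/2)*t)
    have hpos2 := Real.exp_pos (t/2)
    calc t * Real.exp (-t) = (t * Real.exp (-(1/2)*t)) * Real.exp (-(1/2)*t) := by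
          rw [h2]; ring
      _ ≤ 2 * Real.exp (-(1/2)*t) := by
          apply mul_le_mul_of_nonneg_right _ hpos.le
          have h5 : t ≤ 2 * Real.exp (t/2) := by nlinarith
          calc t * Real.exp (-(1/2)*t) ≤ (2 * Real.exp (t/2)) * Real.exp (-(1/2)*t) :=
                mul_le_mul_of_nonneg_right h5 hpos.le
            _ = 2 := by rw [h4] at h3; nlinarith [h3]
      _ = 2 * Real.exp (-(1/2) * (‖w‖)^2) := rfl

lemma dens_meas : Measurable (fun w : ℂ => (π⁻¹ * Real.exp (-(‖w‖) ^ 2)).toNNReal) := by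
  exact ((continuous_const.mul (Real.continuous_exp.comp
    ((continuous_norm.pow 2).neg))).measurable).real_toNNReal

lemma integral_gaussianC (f : ℂ → ℝ) :
    ∫ w, f w ∂gaussianC = ∫ w, (π⁻¹ * Real.exp (-(‖w‖) ^ 2)) * f w := by
  rw [gaussianC,
    show (fun w : ℂ => ENNReal.ofReal (π⁻¹ * Real.exp (-(‖w‖) ^ 2)))
      = fun w => ((π⁻¹ * Real.exp (-(‖w‖)^2)).toNNReal : ENNReal) from rfl,
    integral_withDensity_eq_integral_smul dens_meas]
  congr 1
  funext w
  rw [NNReal.smul_def, Real.coe_toNNReal _ (by positivity), smul_eq_mul]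

lemma integrable_gaussianC_iff (f : ℂ → ℝ) :
    Integrable f gaussianC ↔
      Integrable (fun w => (π⁻¹ * Real.exp (-(‖w‖) ^ 2)) * f w) volume := by
  have key := integrable_withDensity_iff_integrable_smul (μ := volume) dens_meas (g := f)
  have e1 : (fun w : ℂ => (π⁻¹ * Real.exp (-(‖w‖)^2)).toNNReal • f w)
      = fun w => (π⁻¹ * Real.exp (-(‖w‖) ^ 2)) * f w := by
    funext w
    rw [NNReal.smul_def, Real.coe_toNNReal _ (by positivity), smul_eq_mul]
  rw [e1] at key
  rw [gaussianC,
    show (fun w : ℂ => ENNReal.ofReal (π⁻¹ * Real.exp (-(‖w‖) ^ 2)))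
      = fun w => ((π⁻¹ * Real.exp (-(‖w‖)^2)).toNNReal : ENNReal) from rfl]
  exact key

instance gaussianC_prob : IsProbabilityMeasure gaussianC := by
  constructor
  rw [gaussianC, withDensity_apply _ MeasurableSet.univ, Measure.restrict_univ,
    ← ofReal_integral_eq_lintegral_ofReal]
  · rw [integral_const_mul]
    have h := int_polar 0
    simp only [mul_zero, pow_zero, one_mul, Nat.factorial_zero, Nat.cast_one] at h
    rw [h, mul_one, inv_mul_cancel₀ pi_ne_zero, ENNReal.ofReal_one]
  · have := (integ_exp (b := 1) (by norm_num)).const_mul π⁻¹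
    refine this.congr (Filter.Eventually.of_forall fun w => by norm_num)
  · exact Filter.Eventually.of_forall fun w => by positivity

lemma integrable_sq_gaussianC : Integrable (fun w => (‖w‖)^2) gaussianC := by
  rw [integrable_gaussianC_iff]
  refine (integ_sq_exp.const_mul π⁻¹).congr (Filter.Eventually.of_forall fun w => by ring)

lemma integral_sq_gaussianC : ∫ w, (‖w‖)^2 ∂gaussianC = 1 := by
  rw [integral_gaussianC]
  have h0 : (fun w : ℂ => (π⁻¹ * Real.exp (-(‖w‖)^2)) * (‖w‖)^2)
      = fun w => π⁻¹ * ((‖w‖)^2 * Real.exp (-(‖w‖)^2)) := by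
    funext w; ring
  rw [h0, integral_const_mul]
  have h := int_polar 1
  simp only [mul_one, Nat.factorial_one, Nat.cast_one] at h
  rw [h, inv_mul_cancel₀ pi_ne_zero]

theorem ccsc_bounded (M : ℕ) (hM : 1 ≤ M) (x : Fin M → ℂ)
    (σ : ℝ) (hσ : 0 < σ) (s : ℝ) (hs : 0 ≤ s) :
    |Ccc M x σ s| ≤ Real.logb 2 M + Real.logb 2 (Real.exp 1) := by
  haveI : Nonempty (Fin M) := Fin.pos_iff_nonempty.mp hM
  set c := Real.logb 2 (Real.exp 1) with hcdef
  have hc : c = (Real.log 2)⁻¹ := by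
    rw [hcdef, Real.logb, Real.log_exp, one_div]
  have hlog2 : 0 < Real.log 2 := Real.log_pos one_lt_two
  have hc0 : 0 ≤ c := by rw [hc]; positivity
  have hM1 : (1:ℝ) ≤ (M:ℝ) := by exact_mod_cast hM
  have hM0 : (M:ℝ) ≠ 0 := by linarith
  have hlogM : 0 ≤ Real.logb 2 (M:ℝ) := Real.logb_nonneg one_lt_two hM1
  have key : ∀ τ : ℝ, 0 < τ → ∀ i : Fin M,
      -c ≤ g M x τ s i ∧ g M x τ s i ≤ Real.logb 2 (M:ℝ) := by
    intro τ hτ i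
    set S : ℂ → ℝ := fun w => ∑ j : Fin M,
      Real.exp (-(‖(τ : ℂ) * w + (Real.sqrt s : ℂ) * (x i - x j)‖) ^ 2 / τ ^ 2)
      with hSdef
    have hgeq : g M x τ s i = ∫ w, Real.logb 2 (S w) ∂gaussianC := rfl
    have hSpos : ∀ w, 0 < S w := fun w =>
      Finset.sum_pos (fun j _ => Real.exp_pos _) Finset.univ_nonempty
    have hSle : ∀ w, S w ≤ (M:ℝ) := by
      intro w
      have : S w ≤ ∑ _j : Fin M, (1:ℝ) := by
        apply Finset.sum_le_sum
        intro j _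
        rw [Real.exp_le_one_iff]
        exact div_nonpos_iff.mpr (Or.inr ⟨neg_nonpos.mpr (sq_nonneg _), sq_nonneg _⟩)
      simpa using this
    have hSge : ∀ w, Real.exp (-(‖w‖)^2) ≤ S w := by
      intro w
      have h0 : ((τ:ℂ) * w + (Real.sqrt s : ℂ) * (x i - x i)) = (τ:ℂ) * w := by
        rw [sub_self, mul_zero, add_zero]
      have habs : ‖(τ:ℂ) * w‖ = τ * ‖w‖ := by
        rw [norm_mul, Complex.norm_real, Real.norm_of_nonneg hτ.le]
      have hterm :
          Real.exp (-(‖(τ:ℂ) * w + (Real.sqrt s:ℂ) * (x i - x i)‖)^2 / τ^2)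
            = Real.exp (-(‖w‖)^2) := by
        rw [h0, habs]
        congr 1
        field_simp
      have hle := Finset.single_le_sum (f := fun j : Fin M =>
          Real.exp (-(‖(τ : ℂ) * w + (Real.sqrt s : ℂ) * (x i - x j)‖) ^ 2 / τ ^ 2))
        (fun j _ => (Real.exp_pos _).le) (Finset.mem_univ i)
      have hle2 : Real.exp
          (-(‖(τ:ℂ) * w + (Real.sqrt s:ℂ) * (x i - x i)‖)^2 / τ^2) ≤ S w := hle
      rwa [hterm] at hle2
    have hSmeas : Measurable S := by
      apply Finset.measurable_sum
      intro j _
      apply Continuous.measurable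
      apply Real.continuous_exp.comp
      apply Continuous.div_const
      apply Continuous.neg
      apply Continuous.pow
      exact continuous_norm.comp ((continuous_const.mul continuous_id).add continuous_const)
    have hFmeas : AEStronglyMeasurable (fun w => Real.logb 2 (S w)) gaussianC := by
      have e : (fun w => Real.logb 2 (S w)) = fun w => Real.log (S w) / Real.log 2 := rfl
      rw [e]
      exact ((Real.measurable_log.comp hSmeas).div_const _).aestronglyMeasurable
    have hFle : ∀ w, Real.logb 2 (S w) ≤ Real.logb 2 (M:ℝ) := fun w =>
      Real.logb_le_logb_of_le one_lt_two (hSpos w) (hSle w)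
    have hFge : ∀ w, -(c * (‖w‖)^2) ≤ Real.logb 2 (S w) := by
      intro w
      have h1 : Real.logb 2 (Real.exp (-(‖w‖)^2)) ≤ Real.logb 2 (S w) :=
        Real.logb_le_logb_of_le one_lt_two (Real.exp_pos _) (hSge w)
      have h2 : Real.logb 2 (Real.exp (-(‖w‖)^2)) = -(c * (‖w‖)^2) := by
        rw [Real.logb, Real.log_exp, hc, div_eq_mul_inv]; ring
      rw [← h2]
      exact h1
    have hInt : Integrable (fun w => Real.logb 2 (S w)) gaussianC := by
      apply Integrable.mono'
        ((integrable_const (μ := gaussianC) (Real.logb 2 (M:ℝ))).add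
          (integrable_sq_gaussianC.const_mul c)) hFmeas
      refine Filter.Eventually.of_forall fun w => ?_
      rw [Pi.add_apply]
      rw [Real.norm_eq_abs, abs_le]
      have hct : 0 ≤ c * (‖w‖)^2 := mul_nonneg hc0 (sq_nonneg _)
      exact ⟨by linarith [hFge w], by linarith [hFle w]⟩
    constructor
    · rw [hgeq]
      have h1 : ∫ w, (-(c * (‖w‖)^2)) ∂gaussianC
          ≤ ∫ w, Real.logb 2 (S w) ∂gaussianC :=
        integral_mono ((integrable_sq_gaussianC.const_mul c).neg) hInt hFge
      have h2 : ∫ w, (-(c * (‖w‖)^2)) ∂gaussianC = -c := by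
        rw [integral_neg, integral_const_mul, integral_sq_gaussianC, mul_one]
      linarith
    · rw [hgeq]
      have h1 : ∫ w, Real.logb 2 (S w) ∂gaussianC
          ≤ ∫ _w, Real.logb 2 (M:ℝ) ∂gaussianC :=
        integral_mono hInt (integrable_const _) hFle
      rwa [integral_const, probReal_univ, one_smul] at h1
  have hdiff : ∀ i : Fin M, |g M x σ s i - g M x 1 s i| ≤ Real.logb 2 (M:ℝ) + c := by
    intro i
    obtain ⟨ha1, ha2⟩ := key σ hσ i
    obtain ⟨hb1, hb2⟩ := key 1 one_pos i
    rw [abs_le]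
    constructor <;> linarith
  rw [Ccc, abs_mul, abs_of_nonneg (div_nonneg zero_le_one (Nat.cast_nonneg M))]
  have hsum : |∑ i : Fin M, (g M x σ s i - g M x 1 s i)|
      ≤ (M:ℝ) * (Real.logb 2 (M:ℝ) + c) := by
    calc |∑ i : Fin M, (g M x σ s i - g M x 1 s i)|
        ≤ ∑ i : Fin M, |g M x σ s i - g M x 1 s i| := Finset.abs_sum_le_sum_abs _ _
      _ ≤ ∑ _i : Fin M, (Real.logb 2 (M:ℝ) + c) := Finset.sum_le_sum (fun i _ => hdiff i)
      _ = (M:ℝ) * (Real.logb 2 (M:ℝ) + c) := by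
        rw [Finset.sum_const, Finset.card_univ, Fintype.card_fin, nsmul_eq_mul]
  calc (1/(M:ℝ)) * |∑ i : Fin M, (g M x σ s i - g M x 1 s i)|
      ≤ (1/(M:ℝ)) * ((M:ℝ) * (Real.logb 2 (M:ℝ) + c)) :=
        mul_le_mul_of_nonneg_left hsum (div_nonneg zero_le_one (Nat.cast_nonneg M))
    _ = Real.logb 2 (M:ℝ) + c := by
        rw [one_div, inv_mul_cancel_left₀ hM0]
end
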